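/- Let T be the theory of an equivalence relation E with infinitely many classes, each infinite, and let φ(x;y,z,w) = (z = w → x = y) ∧ (z ≠ w → E(x,y)). Then for every n, there exist a model M, a set B ⊆ M, and a φ-type p_n over B such that for any elementary extension (N;B') ⪰ (M;B), every φ-isolated φ-extension p' of p_n with dom(p') ⊆ B' requires an isolating finite subtype of size at least n. Consequently, there is no uniform bound on the size of φ-isolating subtypes in Theorem 2.5, even for stable φ. -/

import Mathlib

open FirstOrder

universe u u' v w

namespace IET

/-- Bundled models of the complete theory of `M` (elementary-extension candidates). -/
abbrev MT (L : FirstOrder.Language.{v, w}) (M : Type u) [L.Structure M] :=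
  Language.Theory.ModelType.{v, w, max u v w} (L.completeTheory M)

variable (L : FirstOrder.Language.{v, w}) (M : Type u) [L.Structure M]

/-- Consistency of a set of signed `φ`-instances with parameters in `M`:
simultaneous realization in some elementary extension of `M`. -/
def Consistent (φ : L.Formula (Fin 2)) (X : Set (M × Bool)) : Prop :=
  ∃ (N : MT L M) (f : M ↪ₑ[L] N) (a : N),
    ∀ q ∈ X, (φ.Realize ![a, f q.1] ↔ q.2 = true)

/-- The set of signed instances `{φ(x;b)^(s b) : b ∈ B}`. -/
def typeSet (B : Set M) (s : M → Bool) : Set (M × Bool) :=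
  {q | q.1 ∈ B ∧ s q.1 = q.2}

/-- `s` determines a (complete, consistent) φ-type over `B`. -/
def IsPhiType (φ : L.Formula (Fin 2)) (B : Set M) (s : M → Bool) : Prop :=
  Consistent L M φ (typeSet M B s)

/-- `B` is φ-independent: every sign pattern over `B` is consistent. -/
def PhiIndep (φ : L.Formula (Fin 2)) (B : Set M) : Prop :=
  ∀ s : M → Bool, Consistent L M φ (typeSet M B s)

/-- The space `S_φ(B)` of complete φ-types over `B`. -/
def Sphi (φ : L.Formula (Fin 2)) (B : Set M) : Set (B → Bool) :=
  {s | Consistent L M φ {q | ∃ h : q.1 ∈ B, s ⟨q.1, h⟩ = q.2}}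

/-- The set of signed instances `X₀` entails the set `X` (in every elementary
extension of `M`). -/
def EntailsIn (φ : L.Formula (Fin 2)) (X₀ X : Set (M × Bool)) : Prop :=
  ∀ (N : MT L M) (f : M ↪ₑ[L] N) (a : N),
    (∀ q ∈ X₀, (φ.Realize ![a, f q.1] ↔ q.2 = true)) →
    ∀ q ∈ X, (φ.Realize ![a, f q.1] ↔ q.2 = true)

/-- A φ-type (given as a set of signed instances) is φ-isolated if some finite
subtype entails it. -/
def PhiIsolated (φ : L.Formula (Fin 2)) (X : Set (M × Bool)) : Prop :=
  ∃ X₀ ⊆ X, X₀.Finite ∧ EntailsIn L M φ X₀ X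

/-- `φ` has independence dimension `n`: some φ-independent set of size `n` exists
in an elementary extension of `M`, and every φ-independent set in any elementary
extension of `M` is finite of size at most `n`. -/
def HasID (φ : L.Formula (Fin 2)) (n : ℕ) : Prop :=
  (∃ (N : MT L M) (_ : M ↪ₑ[L] N) (B : Set N),
      B.Finite ∧ B.ncard = n ∧ PhiIndep L N φ B) ∧
    ∀ (N : MT L M) (_ : M ↪ₑ[L] N) (B : Set N),
      PhiIndep L N φ B → B.Finite ∧ B.ncard ≤ n

/-- A language with a single unary relation symbol `P`. -/
def unaryLang : FirstOrder.Language.{0, 0} :=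
  ⟨fun _ => Empty, fun n => PLift (n = 1)⟩

/-- Interpret the unary predicate as membership in `B`. -/
def unaryStr (B : Set M) : (unaryLang).Structure M where
  funMap := fun f _ => f.elim
  RelMap := fun r v => v (Fin.cast r.down.symm 0) ∈ B

/-- The pair structure `(M; B)` in the language `L ∪ {P}`. -/
def pairStr (B : Set M) : (L.sum unaryLang).Structure M :=
  @Language.sumStructure L unaryLang M _ (unaryStr M B)

/-- An elementary embedding of pairs `(M; B) ⪯ (N; B')` in the language `L ∪ {P}`. -/
def PairEmb (B : Set M) (N : Type u') [L.Structure N] (B' : Set N) : Type _ :=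
  @FirstOrder.Language.ElementaryEmbedding (L.sum unaryLang) M N
    (pairStr L M B) (pairStr L N B')

/-- The underlying map of an elementary embedding of pairs. -/
def pairFn {L₀ : FirstOrder.Language.{v, w}} {M₀ : Type u} [L₀.Structure M₀] {B : Set M₀}
    {N : Type u'} [L₀.Structure N] {B' : Set N}
    (g : PairEmb L₀ M₀ B N B') : M₀ → N :=
  @FirstOrder.Language.ElementaryEmbedding.toFun (L₀.sum unaryLang) M₀ N
    (pairStr L₀ M₀ B) (pairStr L₀ N B') g

/-- Consistency for partitioned formulas `φ(x̄; ȳ)` of tuple variables. -/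
def ConsistentT {k l : ℕ} (φ : L.Formula (Fin k ⊕ Fin l))
    (X : Set ((Fin l → M) × Bool)) : Prop :=
  ∃ (N : MT L M) (f : M ↪ₑ[L] N) (a : Fin k → N),
    ∀ q ∈ X, (φ.Realize (Sum.elim a (fun i => f (q.1 i))) ↔ q.2 = true)

/-- The set of signed instances `{φ(x̄; b̄)^(s b̄) : b̄ ∈ D}`. -/
def typeSetT {l : ℕ} (D : Set (Fin l → M)) (s : (Fin l → M) → Bool) :
    Set ((Fin l → M) × Bool) :=
  {q | q.1 ∈ D ∧ s q.1 = q.2}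

/-- `s` determines a complete consistent φ-type over `D`. -/
def IsPhiTypeT {k l : ℕ} (φ : L.Formula (Fin k ⊕ Fin l)) (D : Set (Fin l → M))
    (s : (Fin l → M) → Bool) : Prop :=
  ConsistentT L M φ (typeSetT M D s)

/-- `D` is φ-independent. -/
def PhiIndepT {k l : ℕ} (φ : L.Formula (Fin k ⊕ Fin l)) (D : Set (Fin l → M)) : Prop :=
  ∀ s : (Fin l → M) → Bool, ConsistentT L M φ (typeSetT M D s)

/-- Independence dimension for partitioned tuple formulas. -/
def HasIDT {k l : ℕ} (φ : L.Formula (Fin k ⊕ Fin l)) (n : ℕ) : Prop :=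
  (∃ (N : MT L M) (_ : M ↪ₑ[L] N) (D : Set (Fin l → N)),
      D.Finite ∧ D.ncard = n ∧ PhiIndepT L N φ D) ∧
    ∀ (N : MT L M) (_ : M ↪ₑ[L] N) (D : Set (Fin l → N)),
      PhiIndepT L N φ D → D.Finite ∧ D.ncard ≤ n

/-- Entailment between sets of signed tuple instances. -/
def EntailsT {k l : ℕ} (φ : L.Formula (Fin k ⊕ Fin l))
    (X₀ X : Set ((Fin l → M) × Bool)) : Prop :=
  ∀ (N : MT L M) (f : M ↪ₑ[L] N) (a : Fin k → N),
    (∀ q ∈ X₀, (φ.Realize (Sum.elim a (fun i => f (q.1 i))) ↔ q.2 = true)) →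
    ∀ q ∈ X, (φ.Realize (Sum.elim a (fun i => f (q.1 i))) ↔ q.2 = true)

/-- φ-isolation for tuple φ-types. -/
def PhiIsolatedT {k l : ℕ} (φ : L.Formula (Fin k ⊕ Fin l))
    (X : Set ((Fin l → M) × Bool)) : Prop :=
  ∃ X₀ ⊆ X, X₀.Finite ∧ EntailsT L M φ X₀ X

/-- The language with a single binary relation `E`. -/
def langE : FirstOrder.Language.{0, 0} :=
  ⟨fun _ => Empty, fun n => PLift (n = 2)⟩

/-- The interpretation of the relation `E`. -/
def Erel {X : Type u} [inst : langE.Structure X] (a b : X) : Prop :=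
  @Language.Structure.RelMap langE X inst 2 (PLift.up rfl) ![a, b]

/-- `X` is a model of the theory of an equivalence relation with infinitely many
classes, all infinite. -/
def EqvModel (X : Type u) [langE.Structure X] : Prop :=
  Equivalence (fun a b : X => Erel a b) ∧
  {s : Set X | ∃ a : X, s = {b | Erel a b}}.Infinite ∧
  ∀ a : X, {b : X | Erel a b}.Infinite

/-- The formula `φ(x; y, z, w) = (z = w → x = y) ∧ (z ≠ w → E(x, y))`. -/
def phiE : langE.Formula (Fin 1 ⊕ Fin 3) :=
  (Language.Term.equal (Language.Term.var (Sum.inr 1)) (Language.Term.var (Sum.inr 2)) ⟹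
      Language.Term.equal (Language.Term.var (Sum.inl 0)) (Language.Term.var (Sum.inr 0))) ⊓
  (Language.BoundedFormula.not
      (Language.Term.equal (Language.Term.var (Sum.inr 1)) (Language.Term.var (Sum.inr 2))) ⟹
    Language.Relations.formula (PLift.up rfl : langE.Relations 2)
      ![Language.Term.var (Sum.inl 0), Language.Term.var (Sum.inr 0)])

/-- A bundled `langE`-structure. -/
structure EqvStruct : Type (u + 1) where
  carrier : Type u
  [str : langE.Structure carrier]

attribute [instance] EqvStruct.str

instance : CoeSort EqvStruct.{u} (Type u) := ⟨EqvStruct.carrier⟩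


section
open Language
variable {X : Type*} [inst : langE.Structure X]

lemma realize_phiE (a : Fin 1 → X) (w : Fin 3 → X) :
    phiE.Realize (Sum.elim a w) ↔
      ((w 1 = w 2 → a 0 = w 0) ∧ (w 1 ≠ w 2 → Erel (a 0) (w 0))) := by
  simp only [phiE, Formula.Realize, Erel, Term.equal, Relations.formula,
    BoundedFormula.realize_inf, BoundedFormula.realize_imp, BoundedFormula.realize_not,
    BoundedFormula.realize_bdEqual, BoundedFormula.realize_rel, Term.realize_var,
    Term.realize_relabel, Function.comp, Sum.elim_inl, Sum.elim_inr]
  have h : (fun i => Term.realize (Sum.elim (Sum.elim a w) (default : Fin 0 → X) ∘ Sum.inl)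
      ((![Language.var (Sum.inl 0), Language.var (Sum.inr 0)] : Fin 2 → langE.Term (Fin 1 ⊕ Fin 3)) i))
      = ![a 0, w 0] := by
    funext i; fin_cases i <;> rfl
  refine and_congr Iff.rfl (imp_congr Iff.rfl ?_)
  rw [← h]
  exact BoundedFormula.realize_rel.trans (by simp only [Term.realize_relabel])

end

/-- The standard model: `ℕ × ℤ`, `E` is equality of first coordinates. -/
instance carrStr : langE.Structure (ULift.{u} (ℕ × ℤ)) where
  funMap := fun f _ => f.elim
  RelMap := fun {m} r v =>
    (v (Fin.cast r.down.symm 0)).down.1 = (v (Fin.cast r.down.symm 1)).down.1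

lemma erel_carr (a b : ULift.{u} (ℕ × ℤ)) : Erel a b ↔ a.down.1 = b.down.1 := Iff.rfl

abbrev stdM : EqvStruct.{u} := ⟨ULift.{u} (ℕ × ℤ)⟩

lemma eqv_stdM : EqvModel (stdM.{u}) := by
  refine ⟨⟨fun a => rfl, fun h => h.symm, fun h h' => h.trans h'⟩, ?_, ?_⟩
  · apply Set.infinite_of_injective_forall_mem
      (f := fun k : ℕ => {b : stdM.{u} | b.down.1 = k})
    · intro k l h
      have h2 : (⟨(k, 0)⟩ : stdM.{u}) ∈ (fun k : ℕ => {b : stdM.{u} | b.down.1 = k}) l := by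
        rw [← h]; exact rfl
      exact h2
    · intro k
      refine ⟨⟨(k, 0)⟩, ?_⟩
      ext b
      show b.down.1 = k ↔ Erel (⟨(k, 0)⟩ : stdM.{u}) b
      rw [erel_carr]
      exact eq_comm
  · intro a
    apply Set.infinite_of_injective_forall_mem
      (f := fun i : ℤ => (⟨(a.down.1, i)⟩ : stdM.{u}))
    · intro i j h
      simpa using congrArg (fun x => x.down.2) h
    · intro i
      exact rfl

instance : DecidableEq (stdM.{u} : Type u) := inferInstanceAs (DecidableEq (ULift (ℕ × ℤ)))
instance : Nonempty (stdM.{u} : Type u) := inferInstanceAs (Nonempty (ULift (ℕ × ℤ)))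

def Bstd : Set stdM.{u} := {p | 0 ≤ p.down.2 ∧ p.down.2 < (p.down.1 : ℤ)}

def sstd (n : ℕ) : (Fin 3 → stdM.{u}) → Bool :=
  fun v => if v 1 = v 2 then false else decide ((v 0).down.1 = n)

/-- The automorphism shifting the `n`-th class by one. -/
def shiftAut (n : ℕ) : stdM.{u} ≃[langE] stdM.{u} where
  toFun := fun p => ⟨(p.down.1, if p.down.1 = n then p.down.2 + 1 else p.down.2)⟩
  invFun := fun p => ⟨(p.down.1, if p.down.1 = n then p.down.2 - 1 else p.down.2)⟩
  left_inv := by rintro ⟨a, b⟩; by_cases h : a = n <;> simp [h]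
  right_inv := by rintro ⟨a, b⟩; by_cases h : a = n <;> simp [h]
  map_fun' := fun f _ => f.elim
  map_rel' := by
    intro m r x
    rcases r with ⟨rfl⟩
    exact Iff.rfl

lemma shiftAut_apply (n : ℕ) (p : stdM.{u}) :
    (shiftAut.{u} n) p = ⟨(p.down.1, if p.down.1 = n then p.down.2 + 1 else p.down.2)⟩ := rfl

lemma shift_ne (n : ℕ) (p : stdM.{u}) (hp : p ∈ Bstd.{u}) :
    (⟨(n, 0)⟩ : stdM.{u}) ≠ (shiftAut.{u} n) p := by
  intro h
  have h1 := congrArg (fun x : stdM.{u} => x.down.1) h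
  have h2 := congrArg (fun x : stdM.{u} => x.down.2) h
  rw [shiftAut_apply] at h1 h2
  simp only at h1 h2
  rcases hp with ⟨hp1, hp2⟩
  rw [if_pos h1.symm] at h2
  omega

lemma shift_erel (n : ℕ) (p : stdM.{u}) :
    Erel (⟨(n, 0)⟩ : stdM.{u}) ((shiftAut.{u} n) p) ↔ p.down.1 = n := by
  rw [shiftAut_apply, erel_carr]
  exact eq_comm

lemma realize_isPhiTypeT (n : ℕ) :
    IsPhiTypeT langE stdM.{u} phiE {v | ∀ i, v i ∈ Bstd.{u}} (sstd.{u} n) := by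
  refine ⟨Language.Theory.ModelType.of _ stdM.{u}, (shiftAut.{u} n).toElementaryEmbedding,
    fun _ => ⟨(n, 0)⟩, ?_⟩
  rintro ⟨v, b⟩ ⟨hv, hs⟩
  erw [realize_phiE]
  simp only at hv hs ⊢
  subst hs
  unfold sstd
  have hinj : Function.Injective (shiftAut.{u} n) :=
    (shiftAut.{u} n).toEquiv.injective
  by_cases h : v 1 = v 2
  · rw [if_pos h]
    simp only [Bool.false_eq_true, iff_false, not_and]
    intro hh
    exact absurd (hh (congrArg _ h)) (shift_ne n (v 0) (hv 0))
  · rw [if_neg h]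
    have h2 : (shiftAut.{u} n) (v 1) ≠ (shiftAut.{u} n) (v 2) := fun hc => h (hinj hc)
    constructor
    · rintro ⟨-, hE⟩
      simpa using (shift_erel n (v 0)).1 (hE h2)
    · intro hd
      refine ⟨fun hc => absurd hc h2, fun _ => (shift_erel n (v 0)).2 (by simpa using hd)⟩

section formulas
open Language

/-- Atomic formula `E(y₀, y₁)` in `langE`. -/
def eF : langE.Formula (Fin 2) :=
  Relations.formula (PLift.up rfl : langE.Relations 2) ![Language.var 0, Language.var 1]

lemma realize_eF {X : Type*} [langE.Structure X] (v : Fin 2 → X) :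
    eF.Realize v ↔ Erel (v 0) (v 1) := by
  have h : (fun i => Term.realize v
      ((![Language.var 0, Language.var 1] : Fin 2 → langE.Term (Fin 2)) i)) = ![v 0, v 1] := by
    funext i; fin_cases i <;> rfl
  simp only [eF, Erel, Formula.realize_rel]
  refine Formula.realize_rel.trans ?_
  rw [show (fun i => Term.realize v (![Language.var 0, Language.var 1] i)) = ![v 0, v 1] from h]

/-- `∀ x y, E(x,y) → E(y,x)`. -/
def symSent : langE.Sentence :=
  (Relations.boundedFormula₂ (PLift.up rfl : langE.Relations 2) (&0) (&1) ⟹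
    Relations.boundedFormula₂ (PLift.up rfl : langE.Relations 2) (&1) (&0)).all.all

/-- `∀ x y z, E(x,y) → E(y,z) → E(x,z)`. -/
def transSent : langE.Sentence :=
  (Relations.boundedFormula₂ (PLift.up rfl : langE.Relations 2) (&0) (&1) ⟹
    (Relations.boundedFormula₂ (PLift.up rfl : langE.Relations 2) (&1) (&2) ⟹
      Relations.boundedFormula₂ (PLift.up rfl : langE.Relations 2) (&0) (&2))).all.all.all

lemma realize_symSent {X : Type*} [langE.Structure X] :
    X ⊨ symSent ↔ ∀ a b : X, Erel a b → Erel b a := by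
  simp only [symSent, Sentence.Realize, Formula.Realize, BoundedFormula.realize_all,
    BoundedFormula.realize_imp, BoundedFormula.realize_rel₂, Term.realize_var,
    Sum.elim_inr]
  refine forall_congr' fun a => forall_congr' fun b => imp_congr ?_ ?_ <;> exact BoundedFormula.realize_rel₂

lemma realize_transSent {X : Type*} [langE.Structure X] :
    X ⊨ transSent ↔ ∀ a b c : X, Erel a b → Erel b c → Erel a c := by
  simp only [transSent, Sentence.Realize, Formula.Realize, BoundedFormula.realize_all,
    BoundedFormula.realize_imp, BoundedFormula.realize_rel₂, Term.realize_var,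
    Sum.elim_inr]
  refine forall_congr' fun a => forall_congr' fun b => forall_congr' fun c =>
    imp_congr ?_ (imp_congr ?_ ?_) <;> exact BoundedFormula.realize_rel₂

end formulas

section chi
open Language

/-- The unary predicate as a proposition. -/
def Pu {X : Type*} [inst : unaryLang.Structure X] (x : X) : Prop :=
  @Language.Structure.RelMap unaryLang X inst 1 (PLift.up rfl) ![x]

lemma pu_unaryStr {X : Type*} (B : Set X) (x : X) :
    @Pu X (unaryStr X B) x ↔ x ∈ B := Iff.rfl

/-- `∀ x, (P x ∧ ⋁ᵢ E(x, yᵢ)) → ⋁ᵢ x = yᵢ`. -/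
noncomputable def chiF (n : ℕ) : (langE.sum unaryLang).Formula (Fin n) :=
  (BoundedFormula.imp
    ((Relations.boundedFormula₁
        (Sum.inr (PLift.up rfl) : (langE.sum unaryLang).Relations 1) (&0)) ⊓
      (BoundedFormula.iSup fun i =>
        Relations.boundedFormula₂
          (Sum.inl (PLift.up rfl) : (langE.sum unaryLang).Relations 2) (&0)
          (Language.var (Sum.inl i))))
    (BoundedFormula.iSup fun i =>
      Term.bdEqual (&0) (Language.var (Sum.inl i)))).all

lemma realize_chiF {X : Type*} [langE.Structure X] [unaryLang.Structure X] (n : ℕ)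
    (c : Fin n → X) :
    (chiF n).Realize c ↔ ∀ x : X, Pu x → (∃ i, Erel x (c i)) → ∃ i, x = c i := by
  simp only [chiF, Formula.Realize, BoundedFormula.realize_all, BoundedFormula.realize_imp,
    BoundedFormula.realize_inf, BoundedFormula.realize_rel₁, BoundedFormula.realize_rel₂,
    BoundedFormula.realize_iSup, BoundedFormula.realize_bdEqual, Term.realize_var,
    Sum.elim_inl, Sum.elim_inr, Finset.mem_univ, true_and, and_imp]
  exact forall_congr' fun a => imp_congr BoundedFormula.realize_rel₁
    (imp_congr (exists_congr fun i => BoundedFormula.realize_rel₂) Iff.rfl)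
end chi

lemma chi_stdM (n : ℕ) :
    letI := unaryStr (ULift.{u} (ℕ × ℤ)) Bstd.{u}
    (chiF n).Realize (fun i : Fin n => (⟨(n, (i : ℤ))⟩ : ULift.{u} (ℕ × ℤ))) := by
  letI := unaryStr (ULift.{u} (ℕ × ℤ)) Bstd.{u}
  rw [realize_chiF]
  rintro x hP ⟨i, hi⟩
  rw [erel_carr] at hi
  obtain ⟨h0, h1⟩ := (pu_unaryStr (X := ULift.{u} (ℕ × ℤ)) Bstd.{u} x).1 hP
  simp only at hi
  refine ⟨⟨x.down.2.toNat, by omega⟩, ?_⟩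
  obtain ⟨⟨x1, x2⟩⟩ := x
  simp only at hi h0 h1 ⊢
  subst hi
  congr 1
  refine Prod.ext rfl ?_
  simp [Int.toNat_of_nonneg h0]

lemma stdM_sym : (stdM.{u} : Type u) ⊨ symSent := by
  rw [realize_symSent]
  intro a b h
  rw [erel_carr] at h ⊢
  exact h.symm

lemma stdM_trans : (stdM.{u} : Type u) ⊨ transSent := by
  rw [realize_transSent]
  intro a b c h h'
  rw [erel_carr] at h h' ⊢
  exact h.trans h'
lemma sstd_eval (n : ℕ) (x y z : stdM.{u}) :
    sstd.{u} n ![x, y, z] = if y = z then false else decide (x.down.1 = n) := rfl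

/-- in the theory of an equivalence relation with infinitely many
infinite classes, with `φ(x; y,z,w) = (z = w → x = y) ∧ (z ≠ w → E(x,y))`, for every
`n` there are a model, a set `B` and a φ-type `p_n` over `B` such that for every
elementary pair extension `(N; B')`, every φ-isolated φ-extension of `p_n` with
domain contained in `B'` needs an isolating finite subtype of size at least `n`. -/
theorem no_uniform_bound_on_isolating_subtypes (n : ℕ) :
    ∃ (M₀ : EqvStruct.{u}) (B : Set M₀) (s : (Fin 3 → M₀) → Bool),
      EqvModel M₀ ∧
      IsPhiTypeT langE M₀ phiE {v | ∀ i, v i ∈ B} s ∧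
      ∀ (N : EqvStruct.{u'}) (B' : Set N) (g : PairEmb langE M₀ B N B')
        (D : Set (Fin 3 → N)) (s' : (Fin 3 → N) → Bool),
        D ⊆ {v | ∀ i, v i ∈ B'} →
        (∀ v : Fin 3 → M₀, (∀ i, v i ∈ B) →
          ((fun i => pairFn g (v i)) ∈ D ∧ s' (fun i => pairFn g (v i)) = s v)) →
        IsPhiTypeT langE N phiE D s' →
        ∀ X₀ ⊆ typeSetT N D s', X₀.Finite →
          EntailsT langE N phiE X₀ (typeSetT N D s') →
          n ≤ X₀.ncard := by
  classical
  refine ⟨stdM.{u}, Bstd.{u}, sstd.{u} n, eqv_stdM.{u}, realize_isPhiTypeT.{u} n, ?_⟩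
  intro N B' g D s' hD h2 htype X₀ hX₀sub hX₀fin hEnt
  by_contra hcon
  push_neg at hcon
  have hn : 0 < n := lt_of_le_of_lt (Nat.zero_le _) hcon
  obtain ⟨N₁, f₁, a₁, ha₁⟩ := htype
  -- set up the pair language structures
  letI instUM : unaryLang.Structure (stdM.{u} : Type u) := unaryStr _ Bstd.{u}
  letI instUN : unaryLang.Structure (N : Type u') := unaryStr _ B'
  let g' : (stdM.{u} : Type u) ↪ₑ[langE.sum unaryLang] (N : Type u') := g
  have hpf : ∀ x : (stdM.{u} : Type u), pairFn g x = g' x := fun _ => rfl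
  have Ginj : Function.Injective (pairFn g) := fun a b h => g'.injective h
  -- basic elements
  set bM : Fin n → (stdM.{u} : Type u) := fun i => ⟨(n, (i : ℤ))⟩ with hbM
  set e₁ : (stdM.{u} : Type u) := ⟨(1, 0)⟩ with he₁
  set e₂ : (stdM.{u} : Type u) := ⟨(2, 0)⟩ with he₂
  set c : Fin n → (N : Type u') := fun i => pairFn g (bM i) with hc
  have hbMB : ∀ i : Fin n, bM i ∈ Bstd.{u} :=
    fun i => ⟨Int.ofNat_nonneg _, by
      show ((i : ℕ) : ℤ) < ((n : ℕ) : ℤ)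
      exact_mod_cast i.isLt⟩
  have he₁B : e₁ ∈ Bstd.{u} := ⟨le_refl _, by norm_num⟩
  have he₂B : e₂ ∈ Bstd.{u} := ⟨le_refl _, by norm_num⟩
  have he12 : e₁ ≠ e₂ := fun h => by
    simpa [he₁, he₂] using congrArg (fun x : ULift.{u} (ℕ × ℤ) => x.down.1) h
  have hcinj : Function.Injective c := by
    intro i j h
    have h2' := Ginj h
    have h3 : ((i : ℕ) : ℤ) = ((j : ℕ) : ℤ) :=
      congrArg (fun x : ULift.{u} (ℕ × ℤ) => x.down.2) h2'
    exact Fin.ext (by exact_mod_cast h3)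
  -- the two kinds of instance facts about the type p_n
  have hE : ∀ i : Fin n, Erel (a₁ 0) (f₁ (c i)) := by
    intro i
    have hm := h2 ![bM i, e₁, e₂] (by
      intro j; fin_cases j
      · exact hbMB i
      · exact he₁B
      · exact he₂B)
    have hsv : sstd.{u} n ![bM i, e₁, e₂] = true := by
      rw [sstd_eval, if_neg he12, decide_eq_true_eq]
    have hq := ha₁ ⟨fun j => pairFn g (![bM i, e₁, e₂] j), true⟩ ⟨hm.1, by rw [hm.2, hsv]⟩
    rw [realize_phiE] at hq
    have hne12 : f₁ (pairFn g (![bM i, e₁, e₂] 1)) ≠ f₁ (pairFn g (![bM i, e₁, e₂] 2)) := by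
      intro hcontr
      exact he12 (Ginj (f₁.injective hcontr))
    exact (hq.mpr rfl).2 hne12
  have hne : ∀ i : Fin n, a₁ 0 ≠ f₁ (c i) := by
    intro i heq
    have hm := h2 ![bM i, bM i, bM i] (by intro j; fin_cases j <;> exact hbMB i)
    have hsv : sstd.{u} n ![bM i, bM i, bM i] = false := by
      rw [sstd_eval, if_pos rfl]
    have hq := ha₁ ⟨fun j => pairFn g (![bM i, bM i, bM i] j), false⟩ ⟨hm.1, by rw [hm.2, hsv]⟩
    rw [realize_phiE] at hq
    have : (false : Bool) = true := hq.mp ⟨fun _ => heq, fun h' => absurd rfl h'⟩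
    simp at this
  -- symmetry and transitivity in N₁
  have hNsym : (N : Type u') ⊨ symSent := by
    have h := g'.map_sentence (Language.LHom.onSentence Language.LHom.sumInl symSent)
    rw [Language.LHom.realize_onSentence, Language.LHom.realize_onSentence] at h
    exact h.1 stdM_sym.{u}
  have hNtrans : (N : Type u') ⊨ transSent := by
    have h := g'.map_sentence (Language.LHom.onSentence Language.LHom.sumInl transSent)
    rw [Language.LHom.realize_onSentence, Language.LHom.realize_onSentence] at h
    exact h.1 stdM_trans.{u}
  have hsym := realize_symSent.1 ((f₁.map_sentence symSent).1 hNsym)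
  have htrans := realize_transSent.1 ((f₁.map_sentence transSent).1 hNtrans)
  -- transfer of χ
  have hchiN : ∀ x : (N : Type u'), Pu x → (∃ i, Erel x (c i)) → ∃ i, x = c i := by
    have hM : (chiF n).Realize (M := (stdM.{u} : Type u)) bM := chi_stdM.{u} n
    have h := (g'.map_formula (chiF n) bM).2 hM
    rw [realize_chiF] at h
    exact h
  -- reflection of E along f₁
  have hrefl : ∀ x y : (N : Type u'), Erel (f₁ x) (f₁ y) ↔ Erel x y := by
    intro x y
    have h := f₁.map_formula eF ![x, y]
    rw [realize_eF, realize_eF] at h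
    exact h
  -- Fact A : equality instances of the type are all negative
  have hAll : ∀ v, v ∈ D → v 1 = v 2 → s' v = false := by
    intro v hv h12
    by_contra htru
    rw [Bool.not_eq_false] at htru
    have hq := ha₁ ⟨v, true⟩ ⟨hv, htru⟩
    rw [realize_phiE] at hq
    have heq : a₁ 0 = f₁ (v 0) := (hq.mpr rfl).1 (congrArg f₁ h12)
    have hEr : Erel (v 0) (c ⟨0, hn⟩) := (hrefl _ _).1 (heq ▸ hE ⟨0, hn⟩)
    obtain ⟨i, hi⟩ := hchiN (v 0) ((pu_unaryStr B' (v 0)).2 (hD hv 0)) ⟨⟨0, hn⟩, hEr⟩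
    exact hne i (by rw [heq, hi])
  -- choose an index not mentioned in X₀
  have hex : ∃ i : Fin n, ∀ q ∈ X₀, ¬(q.1 1 = q.1 2 ∧ q.1 0 = c i) := by
    by_contra hnex
    push_neg at hnex
    choose q hqmem hq12 hq0 using hnex
    haveI := hX₀fin.to_subtype
    have hinj : Function.Injective (fun i : Fin n => (⟨q i, hqmem i⟩ : X₀)) := by
      intro i j h
      apply hcinj
      rw [← hq0 i, ← hq0 j]
      exact congrArg (fun z : X₀ => (z : (Fin 3 → (N : Type u')) × Bool).1 0) h
    have hcard := Nat.card_le_card_of_injective _ hinj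
    rw [Nat.card_eq_fintype_card, Fintype.card_fin, Nat.card_coe_set_eq] at hcard
    omega
  obtain ⟨i₀, hi₀⟩ := hex
  -- Fact C : E-instances of the type agree with c i₀
  have hC : ∀ v, v ∈ D → v 1 ≠ v 2 → (Erel (c i₀) (v 0) ↔ s' v = true) := by
    intro v hv h12
    have hq := ha₁ ⟨v, s' v⟩ ⟨hv, rfl⟩
    rw [realize_phiE] at hq
    have h12' : f₁ (v 1) ≠ f₁ (v 2) := fun h => h12 (f₁.injective h)
    have hiff : Erel (a₁ 0) (f₁ (v 0)) ↔ s' v = true :=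
      ⟨fun hE' => hq.mp ⟨fun hcc => absurd hcc h12', fun _ => hE'⟩,
       fun ht => (hq.mpr ht).2 h12'⟩
    constructor
    · intro h
      exact hiff.1 (htrans _ _ _ (hE i₀) ((hrefl _ _).2 h))
    · intro h
      exact (hrefl _ _).1 (htrans _ _ _ (hsym _ _ (hE i₀)) (hiff.2 h))
  -- apply the entailment with a := c i₀ in N itself
  haveI : Nonempty (N : Type u') := ⟨c i₀⟩
  have hm := h2 ![bM i₀, bM i₀, bM i₀] (by intro j; fin_cases j <;> exact hbMB i₀)
  have hsv : sstd.{u} n ![bM i₀, bM i₀, bM i₀] = false := by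
    rw [sstd_eval, if_pos rfl]
  have hend := hEnt (Language.Theory.ModelType.of _ (N : Type u'))
    (Language.ElementaryEmbedding.refl langE (N : Type u')) (fun _ => c i₀) ?_
    ⟨fun j => pairFn g (![bM i₀, bM i₀, bM i₀] j), false⟩ ⟨hm.1, by rw [hm.2, hsv]⟩
  · erw [realize_phiE] at hend
    have : (false : Bool) = true := hend.mp ⟨fun _ => rfl, fun h' => absurd rfl h'⟩
    simp at this
  · -- X₀ is realized by c i₀
    intro q hq
    obtain ⟨hqD, hqs⟩ := hX₀sub hq
    erw [realize_phiE]
    show ((q.1 1 = q.1 2 → c i₀ = q.1 0) ∧ (q.1 1 ≠ q.1 2 → Erel (c i₀) (q.1 0))) ↔ q.2 = true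
    by_cases h12 : q.1 1 = q.1 2
    · have hf : s' q.1 = false := hAll _ hqD h12
      have hne0 : q.1 0 ≠ c i₀ := fun hcc => hi₀ q hq ⟨h12, hcc⟩
      constructor
      · rintro ⟨h1, -⟩
        exact absurd (h1 h12).symm hne0
      · intro hq2
        rw [← hqs, hf] at hq2
        exact absurd hq2 (by simp)
    · have key := hC q.1 hqD h12
      constructor
      · rintro ⟨-, h2'⟩
        rw [← hqs]
        exact key.1 (h2' h12)
      · intro hq2
        exact ⟨fun hcc => absurd hcc h12, fun _ => key.2 (hqs ▸ hq2)⟩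

end IET
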